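/- Let μ ∈ ℝ, σ² > 0, b > 0, and let ν(v) = ∫_0^∞ (2πgσ²)^{−1/2} exp(−(v − gμ)²/(2gσ²)) · b e^{−bg} dg/g for v ≠ 0. Then ν(v) = (b/|v|) exp{(μ v − |v|(2bσ² + μ²)^{1/2})/σ²}. -/

import Mathlib

open MeasureTheory Real

open Set

lemma integrable_aux {β : ℝ} (hβ : 0 < β) :
    IntegrableOn (fun t : ℝ => Real.exp (-t^2 - β/t^2)) (Ioi 0) := by
  have hmeas : Measurable (fun t : ℝ => Real.exp (-t^2 - β/t^2)) := by
    apply Real.measurable_exp.comp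
    exact ((measurable_id.pow_const 2).neg.sub (measurable_const.div (measurable_id.pow_const 2)))
  refine Integrable.mono' ((integrable_exp_neg_mul_sq one_pos).restrict (s := Ioi 0))
    hmeas.aestronglyMeasurable.restrict ?_
  filter_upwards [ae_restrict_mem measurableSet_Ioi] with t ht
  rw [Real.norm_eq_abs, abs_of_pos (Real.exp_pos _)]
  apply Real.exp_le_exp.mpr
  have : 0 ≤ β / t^2 := by positivity
  nlinarith

lemma glasser_aux {β : ℝ} (hβ : 0 < β) :
    ∫ t in Ioi (0:ℝ), Real.exp (-t^2 - β/t^2) = Real.sqrt π / 2 * Real.exp (-2 * Real.sqrt β) := by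
  set c := Real.sqrt β with hc
  have hc0 : 0 < c := Real.sqrt_pos.mpr hβ
  have hc2 : c^2 = β := Real.sq_sqrt hβ.le
  -- step B : substitution t ↦ c / t
  have hψ' : ∀ t ∈ Ioi (0:ℝ), HasDerivWithinAt (fun t : ℝ => c / t) (-(c/t^2)) (Ioi (0:ℝ)) t := by
    intro t ht
    have := ((hasDerivAt_inv (ne_of_gt (mem_Ioi.mp ht))).const_mul c).hasDerivWithinAt
      (s := Ioi (0:ℝ))
    simp only [div_eq_mul_inv, ← mul_neg]
    exact this
  have hψinj : InjOn (fun t : ℝ => c / t) (Ioi 0) := by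
    intro a ha b hb h
    simp only [mem_Ioi] at ha hb
    field_simp at h
    exact h.symm
  have himg : (fun t : ℝ => c / t) '' Ioi 0 = Ioi 0 := by
    ext x; constructor
    · rintro ⟨t, ht, rfl⟩; exact div_pos hc0 ht
    · intro hx; exact ⟨c / x, div_pos hc0 hx, by field_simp⟩
  have hB := integral_image_eq_integral_abs_deriv_smul measurableSet_Ioi hψ' hψinj
    (fun t : ℝ => Real.exp (-t^2 - β/t^2))
  rw [himg] at hB
  have hB' : (∫ t in Ioi (0:ℝ), Real.exp (-t^2 - β/t^2))
      = ∫ t in Ioi (0:ℝ), (c/t^2) * Real.exp (-t^2 - β/t^2) := by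
    rw [hB]
    refine setIntegral_congr_fun measurableSet_Ioi (fun t ht => ?_)
    simp only [mem_Ioi] at ht
    have ht' : t ≠ 0 := ne_of_gt ht
    have h1 : |(-(c/t^2))| = c/t^2 := by rw [abs_neg, abs_of_pos (by positivity)]
    rw [h1, smul_eq_mul]
    congr 2
    rw [div_pow, hc2]
    have h2 : β / (β / t^2) = t^2 := by field_simp
    rw [h2]
    ring
  -- step A : substitution u = t - c/t
  have hφ' : ∀ t ∈ Ioi (0:ℝ), HasDerivWithinAt (fun t : ℝ => t - c / t) (1 + c/t^2) (Ioi (0:ℝ)) t := by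
    intro t ht
    have h1 := ((hasDerivAt_inv (ne_of_gt (mem_Ioi.mp ht))).const_mul c)
    have h2 := (hasDerivAt_id t).sub h1
    have h3 : (1 : ℝ) - c * -(t^2)⁻¹ = 1 + c/t^2 := by rw [div_eq_mul_inv]; ring
    rw [h3] at h2
    have h4 : (fun t : ℝ => t - c / t) = fun t : ℝ => id t - c * t⁻¹ := by
      funext x; rw [div_eq_mul_inv]; rfl
    rw [h4]
    exact h2.hasDerivWithinAt
  have hφinj : InjOn (fun t : ℝ => t - c / t) (Ioi 0) := by
    apply StrictMonoOn.injOn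
    intro a ha b hb hab
    simp only [mem_Ioi] at ha hb
    have : c / b < c / a := div_lt_div_of_pos_left hc0 ha hab
    simp only
    linarith
  have himgA : (fun t : ℝ => t - c / t) '' Ioi 0 = univ := by
    apply eq_univ_of_forall
    intro y
    set s := Real.sqrt (y^2 + 4*c) with hs
    have hs2 : s^2 = y^2 + 4*c := Real.sq_sqrt (by positivity)
    have hs0 : 0 ≤ s := Real.sqrt_nonneg _
    have hys : |y| < s := by nlinarith [sq_abs y, abs_nonneg y]
    have ht0 : 0 < (y + s)/2 := by
      have : -y ≤ |y| := neg_le_abs y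
      linarith
    refine ⟨(y+s)/2, mem_Ioi.mpr ht0, ?_⟩
    have hne : (y+s)/2 ≠ 0 := ne_of_gt ht0
    have hkey : c/((y+s)/2) = (y+s)/2 - y := by
      rw [div_eq_iff hne]
      linear_combination (-1/4 : ℝ) * hs2
    simp only
    rw [hkey]
    ring
  have hA := integral_image_eq_integral_abs_deriv_smul measurableSet_Ioi hφ' hφinj
    (fun u : ℝ => Real.exp (-u^2))
  rw [himgA] at hA
  have hgauss : ∫ x in (univ : Set ℝ), Real.exp (-x^2) = Real.sqrt π := by
    rw [setIntegral_univ]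
    have := integral_gaussian 1
    simpa using this
  -- integrability of the weighted integrand
  have hI1 : IntegrableOn (fun t : ℝ => Real.exp (-t^2 - β/t^2)) (Ioi 0) := integrable_aux hβ
  have hI2 : IntegrableOn (fun t : ℝ => (c/t^2) * Real.exp (-t^2 - β/t^2)) (Ioi 0) := by
    have := (integrableOn_image_iff_integrableOn_abs_deriv_smul measurableSet_Ioi hψ' hψinj
      (fun t : ℝ => Real.exp (-t^2 - β/t^2))).mp (by rw [himg]; exact hI1)
    refine this.congr_fun (fun t ht => ?_) measurableSet_Ioi
    simp only [mem_Ioi] at ht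
    have ht' : t ≠ 0 := ne_of_gt ht
    beta_reduce
    rw [abs_neg, abs_of_pos (by positivity), smul_eq_mul]
    congr 2
    rw [div_pow, hc2]
    have h2 : β / (β / t^2) = t^2 := by field_simp
    rw [h2]
    ring
  -- pointwise identity for the step-A integrand
  have hpt : ∀ t ∈ Ioi (0:ℝ), |1 + c/t^2| • Real.exp (-(t - c/t)^2)
      = Real.exp (2*c) * (Real.exp (-t^2 - β/t^2) + (c/t^2) * Real.exp (-t^2 - β/t^2)) := by
    intro t ht
    simp only [mem_Ioi] at ht
    have ht' : t ≠ 0 := ne_of_gt ht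
    have e1 : t * (c / t) = c := by field_simp
    have e2 : (c/t)^2 = β/t^2 := by rw [div_pow, hc2]
    have hsq : (t - c/t)^2 = t^2 - 2*c + β/t^2 := by
      calc (t - c/t)^2 = t^2 - 2*(t*(c/t)) + (c/t)^2 := by ring
        _ = t^2 - 2*c + β/t^2 := by rw [e1, e2]
    have hexp : Real.exp (-(t - c/t)^2) = Real.exp (2*c) * Real.exp (-t^2 - β/t^2) := by
      rw [← Real.exp_add]
      congr 1
      rw [hsq]; ring
    rw [abs_of_pos (by positivity), smul_eq_mul, hexp]
    ring
  have key : Real.sqrt π = Real.exp (2*c) * ((∫ t in Ioi (0:ℝ), Real.exp (-t^2 - β/t^2))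
      + ∫ t in Ioi (0:ℝ), (c/t^2) * Real.exp (-t^2 - β/t^2)) := by
    rw [← hgauss, hA, setIntegral_congr_fun measurableSet_Ioi hpt, integral_const_mul,
      integral_add hI1 hI2]
  have h2I : Real.sqrt π = Real.exp (2*c)
      * (2 * ∫ t in Ioi (0:ℝ), Real.exp (-t^2 - β/t^2)) := by
    rw [key, ← hB']; ring
  have he : Real.exp (2*c) ≠ 0 := (Real.exp_pos _).ne'
  rw [show (-2 * Real.sqrt β) = -(2*c) by rw [hc]; ring, Real.exp_neg]
  generalize (∫ t in Ioi (0:ℝ), Real.exp (-t^2 - β/t^2)) = I at h2I ⊢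
  field_simp
  linear_combination -h2I

lemma lemmaC {α β : ℝ} (hα : 0 < α) (hβ : 0 < β) :
    ∫ g in Ioi (0:ℝ), Real.exp (-(α*g) - β/g) / (g * Real.sqrt g)
      = Real.sqrt (π/β) * Real.exp (-2 * Real.sqrt (α*β)) := by
  have hsβ : (0:ℝ) < Real.sqrt β := Real.sqrt_pos.mpr hβ
  have hχ' : ∀ u ∈ Ioi (0:ℝ), HasDerivWithinAt (fun u : ℝ => β / u^2) (-(2*β/u^3))
      (Ioi (0:ℝ)) u := by
    intro u hu
    simp only [mem_Ioi] at hu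
    have hu' : u ≠ 0 := ne_of_gt hu
    have h1 : HasDerivAt (fun u : ℝ => u^2) (2*u^(2-1)) u := by
      simpa using hasDerivAt_pow 2 u
    have h2 := (h1.inv (by positivity)).const_mul β
    have h3 : β * (-(2*u^(2-1)) / (u^2)^2) = -(2*β/u^3) := by
      field_simp
      ring
    rw [h3] at h2
    have h4 : (fun u : ℝ => β / u^2) = fun u : ℝ => β * (u^2)⁻¹ := by
      funext x; rw [div_eq_mul_inv]
    rw [h4]
    exact h2.hasDerivWithinAt
  have hχinj : InjOn (fun u : ℝ => β / u^2) (Ioi 0) := by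
    apply StrictAntiOn.injOn
    intro a ha b hb hab
    simp only [mem_Ioi] at ha hb
    have h1 : a^2 < b^2 := by nlinarith
    exact div_lt_div_of_pos_left hβ (by positivity) h1
  have himg : (fun u : ℝ => β / u^2) '' Ioi 0 = Ioi 0 := by
    ext x; constructor
    · rintro ⟨t, ht, rfl⟩
      simp only [mem_Ioi] at ht ⊢
      positivity
    · intro hx
      simp only [mem_Ioi] at hx
      refine ⟨Real.sqrt (β / x), mem_Ioi.mpr (Real.sqrt_pos.mpr (by positivity)), ?_⟩
      simp only
      rw [Real.sq_sqrt (by positivity)]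
      field_simp
  have h := integral_image_eq_integral_abs_deriv_smul measurableSet_Ioi hχ' hχinj
    (fun g : ℝ => Real.exp (-(α*g) - β/g) / (g * Real.sqrt g))
  rw [himg] at h
  rw [h]
  have hcong : ∀ u ∈ Ioi (0:ℝ), |(-(2*β/u^3))| • (Real.exp (-(α*(β/u^2)) - β/(β/u^2))
      / ((β/u^2) * Real.sqrt (β/u^2)))
      = (2 / Real.sqrt β) * Real.exp (-u^2 - (α*β)/u^2) := by
    intro u hu
    simp only [mem_Ioi] at hu
    have hu' : u ≠ 0 := ne_of_gt hu
    have e1 : Real.sqrt (β/u^2) = Real.sqrt β / u := by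
      rw [Real.sqrt_div hβ.le, Real.sqrt_sq hu.le]
    have e2 : β / (β/u^2) = u^2 := by field_simp
    have e3 : -(α*(β/u^2)) - β/(β/u^2) = -u^2 - (α*β)/u^2 := by
      rw [e2]; ring
    rw [abs_neg, abs_of_pos (by positivity), smul_eq_mul, e1, e3]
    rw [div_eq_mul_inv (Real.exp _)]
    field_simp
  rw [setIntegral_congr_fun measurableSet_Ioi hcong, integral_const_mul,
    glasser_aux (by positivity : (0:ℝ) < α*β)]
  rw [Real.sqrt_div pi_nonneg β]
  field_simp

theorem stmt_17 (mu sigma2 b v : ℝ) (hsigma : 0 < sigma2) (hb : 0 < b) (hv : v ≠ 0) :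
    ∫ g in Set.Ioi (0 : ℝ),
        (2 * π * g * sigma2) ^ (-(1:ℝ)/2) * Real.exp (-(v - g * mu) ^ 2 / (2 * g * sigma2))
          * b * Real.exp (-b * g) / g
      = (b / |v|) * Real.exp ((mu * v - |v| * Real.sqrt (2 * b * sigma2 + mu ^ 2)) / sigma2) := by
  have hα : (0:ℝ) < b + mu^2/(2*sigma2) := by positivity
  have hβ : (0:ℝ) < v^2/(2*sigma2) := by positivity
  have hS : (0:ℝ) < Real.sqrt (2*π*sigma2) := Real.sqrt_pos.mpr (by positivity)
  have hcong : ∀ g ∈ Ioi (0:ℝ),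
      (2 * π * g * sigma2) ^ (-(1:ℝ)/2) * Real.exp (-(v - g * mu) ^ 2 / (2 * g * sigma2))
          * b * Real.exp (-b * g) / g
      = (b * Real.exp (mu*v/sigma2) / Real.sqrt (2*π*sigma2)) *
          (Real.exp (-((b + mu^2/(2*sigma2))*g) - (v^2/(2*sigma2))/g) / (g * Real.sqrt g)) := by
    intro g hg
    simp only [mem_Ioi] at hg
    have hg' : g ≠ 0 := ne_of_gt hg
    have hsg : (0:ℝ) < Real.sqrt g := Real.sqrt_pos.mpr hg
    have hrpow : (2*π*g*sigma2) ^ (-(1:ℝ)/2)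
        = (Real.sqrt (2*π*sigma2) * Real.sqrt g)⁻¹ := by
      rw [show (2*π*g*sigma2) = (2*π*sigma2)*g by ring,
        show (-(1:ℝ)/2) = -(1/2) by norm_num,
        Real.rpow_neg (by positivity), ← Real.sqrt_eq_rpow,
        Real.sqrt_mul (by positivity) g]
    have hexp : Real.exp (-(v - g*mu)^2 / (2*g*sigma2)) * Real.exp (-b*g)
        = Real.exp (mu*v/sigma2) * Real.exp (-((b + mu^2/(2*sigma2))*g) - (v^2/(2*sigma2))/g) := by
      rw [← Real.exp_add, ← Real.exp_add]
      congr 1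
      field_simp
      ring
    calc (2 * π * g * sigma2) ^ (-(1:ℝ)/2) * Real.exp (-(v - g * mu) ^ 2 / (2 * g * sigma2))
          * b * Real.exp (-b * g) / g
        = (Real.sqrt (2*π*sigma2) * Real.sqrt g)⁻¹ * b / g *
            (Real.exp (-(v - g*mu)^2 / (2*g*sigma2)) * Real.exp (-b*g)) := by
          rw [hrpow]; ring
      _ = (Real.sqrt (2*π*sigma2) * Real.sqrt g)⁻¹ * b / g *
            (Real.exp (mu*v/sigma2) *
              Real.exp (-((b + mu^2/(2*sigma2))*g) - (v^2/(2*sigma2))/g)) := by rw [hexp]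
      _ = (b * Real.exp (mu*v/sigma2) / Real.sqrt (2*π*sigma2)) *
            (Real.exp (-((b + mu^2/(2*sigma2))*g) - (v^2/(2*sigma2))/g) / (g * Real.sqrt g)) := by
          field_simp
  rw [setIntegral_congr_fun measurableSet_Ioi hcong, integral_const_mul, lemmaC hα hβ]
  -- final algebra
  have hv' : (0:ℝ) < |v| := abs_pos.mpr hv
  have e1 : π / (v^2/(2*sigma2)) = (2*π*sigma2)/v^2 := by field_simp
  have e2 : Real.sqrt (π / (v^2/(2*sigma2))) = Real.sqrt (2*π*sigma2) / |v| := by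
    rw [e1, Real.sqrt_div (by positivity), Real.sqrt_sq_eq_abs]
  have e3 : (b + mu^2/(2*sigma2)) * (v^2/(2*sigma2))
      = (|v| * Real.sqrt (2*b*sigma2 + mu^2)/(2*sigma2))^2 := by
    rw [div_pow, mul_pow, sq_abs, Real.sq_sqrt (by positivity)]
    field_simp
  have e4 : Real.sqrt ((b + mu^2/(2*sigma2)) * (v^2/(2*sigma2)))
      = |v| * Real.sqrt (2*b*sigma2 + mu^2)/(2*sigma2) := by
    rw [e3, Real.sqrt_sq (by positivity)]
  rw [e2, e4]
  rw [show (b / |v|) * Real.exp ((mu * v - |v| * Real.sqrt (2 * b * sigma2 + mu ^ 2)) / sigma2)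
      = (b / |v|) * (Real.exp (mu*v/sigma2) *
          Real.exp (-2 * (|v| * Real.sqrt (2*b*sigma2 + mu^2)/(2*sigma2)))) by
    rw [← Real.exp_add]
    congr 2
    field_simp
    ring]
  field_simp
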